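/- On gh_{2m+2} = ℝ ⊕ h_{2m+1} with the fundamental form ω_ψ = ψ∧t + dψ, where ψ = Σ a_i x_i + Σ b_j y_j + c₀ z, and the complex structure J given by J(T - dZ) = cZ, J(cZ) = -(T - dZ), JX_i = ε_i Y_i (c ≠ 0, ε_i = ±1): the bilinear form ⟨U,V⟩ := ω_ψ(JU,V) is symmetric and positive definite if and only if a_i = b_i = 0 for all i, c·c₀ > 0, and sgn(c₀)·ε_i = 1 for all i. -/

import Mathlib

/-- `gh_{2m+2} = ℝ ⊕ h_{2m+1}` as a vector space, coordinates `(t, z, x, y)`. -/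
abbrev GH (m : ℕ) := ℝ × ℝ × (Fin m → ℝ) × (Fin m → ℝ)

/-- The 1-form `ψ = Σ a_i x_i + Σ b_j y_j + c₀ z`. -/
def psiGH {m : ℕ} (a b : Fin m → ℝ) (c₀ : ℝ) (U : GH m) : ℝ :=
  (∑ i, a i * U.2.2.1 i) + (∑ j, b j * U.2.2.2 j) + c₀ * U.2.1

/-- The fundamental form `ω_ψ = ψ ∧ t + dψ`, with `dt = 0`, `dx_i = dy_j = 0`,
`dz = -Σ x_i ∧ y_i`, so `dψ = -c₀ Σ x_i ∧ y_i`. -/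
def omegaGH {m : ℕ} (a b : Fin m → ℝ) (c₀ : ℝ) (U V : GH m) : ℝ :=
  psiGH a b c₀ U * V.1 - psiGH a b c₀ V * U.1 -
    c₀ * ∑ i, (U.2.2.1 i * V.2.2.2 i - U.2.2.2 i * V.2.2.1 i)

/-- The complex structure `J` with `J(T - dZ) = cZ`, `J(cZ) = -(T - dZ)`,
`JX_i = ε_i Y_i`, `JY_i = -ε_i X_i`. -/
noncomputable def JGH {m : ℕ} (c d : ℝ) (ε : Fin m → ℝ) (U : GH m) : GH m :=
  (-(d / c) * U.1 - (1 / c) * U.2.1,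
   ((c ^ 2 + d ^ 2) / c) * U.1 + (d / c) * U.2.1,
   fun i => -(ε i) * U.2.2.2 i,
   fun i => ε i * U.2.2.1 i)

lemma pos_of_sign_eq_one {x : ℝ} (h : Real.sign x = 1) : 0 < x := by
  rcases lt_trichotomy x 0 with h' | h' | h'
  · rw [Real.sign_of_neg h'] at h; norm_num at h
  · rw [h', Real.sign_zero] at h; norm_num at h
  · exact h'

lemma neg_of_sign_eq_neg_one {x : ℝ} (h : Real.sign x = -1) : x < 0 := by
  rcases lt_trichotomy x 0 with h' | h' | h'
  · exact h'
  · rw [h', Real.sign_zero] at h; norm_num at h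
  · rw [Real.sign_of_pos h'] at h; norm_num at h

/-- on `gh_{2m+2}`, the bilinear form `⟨U,V⟩ = ω_ψ(JU,V)` is symmetric
and positive definite iff `a_i = b_i = 0` for all `i`, `c·c₀ > 0`, and
`sgn(c₀)·ε_i = 1` for all `i`. -/
theorem stmt15 (m : ℕ) (c d : ℝ) (hc : c ≠ 0)
    (ε : Fin m → ℝ) (hε : ∀ i, ε i = 1 ∨ ε i = -1)
    (a b : Fin m → ℝ) (c₀ : ℝ) :
    ((∀ U V : GH m, omegaGH a b c₀ (JGH c d ε U) V = omegaGH a b c₀ (JGH c d ε V) U) ∧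
      (∀ U : GH m, U ≠ 0 → 0 < omegaGH a b c₀ (JGH c d ε U) U)) ↔
    ((∀ i, a i = 0) ∧ (∀ i, b i = 0) ∧ 0 < c * c₀ ∧ ∀ i, Real.sign c₀ * ε i = 1) := by
  constructor
  · rintro ⟨hsym, hpos⟩
    have hce : ∀ k : Fin m, 0 < c₀ * ε k := by
      intro k
      have h := hpos ((0,0,Pi.single k 1,0) : GH m) (by
        simp [Prod.ext_iff, funext_iff, Pi.single_apply])
      simp only [omegaGH, psiGH, JGH] at h
      norm_num [Pi.single_apply, Finset.sum_ite_eq', mul_comm] at h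
      exact h
    have hcc : 0 < c * c₀ := by
      have h := hpos ((0,1,0,0) : GH m) (by simp [Prod.ext_iff])
      simp only [omegaGH, psiGH, JGH] at h
      norm_num at h
      have hc2 : 0 < c ^ 2 := by positivity
      have h2 := mul_pos h hc2
      have heq : c₀ / c * c ^ 2 = c * c₀ := by field_simp
      linarith [heq ▸ h2]
    refine ⟨?_, ?_, hcc, ?_⟩
    · intro k
      have h := hsym ((0,0,Pi.single k 1,0) : GH m) ((0,1,0,0) : GH m)
      simp only [omegaGH, psiGH, JGH] at h
      norm_num [Pi.single_apply, Finset.sum_ite_eq', mul_comm] at h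
      exact h.resolve_right hc
    · intro k
      have h := hsym ((0,0,0,Pi.single k 1) : GH m) ((0,1,0,0) : GH m)
      simp only [omegaGH, psiGH, JGH] at h
      norm_num [Pi.single_apply, Finset.sum_ite_eq', mul_comm] at h
      exact h.resolve_right hc
    · intro k
      have hk := hce k
      rcases hε k with h1 | h1
      · rw [h1] at hk ⊢
        rw [Real.sign_of_pos (by linarith)]; ring
      · rw [h1] at hk ⊢
        rw [Real.sign_of_neg (by nlinarith)]; ring
  · rintro ⟨ha, hb, hcc, hsg⟩
    have hc₀ : c₀ ≠ 0 := by rintro rfl; simp at hcc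
    have hce : ∀ k : Fin m, 0 < c₀ * ε k := by
      intro k
      rcases hε k with h1 | h1 <;> rw [h1]
      · have hs : Real.sign c₀ = 1 := by have := hsg k; rw [h1] at this; linarith
        have := pos_of_sign_eq_one hs; linarith
      · have hs : Real.sign c₀ = -1 := by have := hsg k; rw [h1] at this; linarith
        have := neg_of_sign_eq_neg_one hs; linarith
    have hqc : 0 < c₀ / c := by
      rcases mul_pos_iff.mp hcc with ⟨h1, h2⟩ | ⟨h1, h2⟩
      · exact div_pos h2 h1
      · exact div_pos_of_neg_of_neg h2 h1
    constructor
    · intro U V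
      simp only [omegaGH, psiGH, JGH, ha, hb, zero_mul, Finset.sum_const_zero, zero_add]
      have hs : (∑ i, (-(ε i) * U.2.2.2 i * V.2.2.2 i - ε i * U.2.2.1 i * V.2.2.1 i))
          = ∑ i, (-(ε i) * V.2.2.2 i * U.2.2.2 i - ε i * V.2.2.1 i * U.2.2.1 i) :=
        Finset.sum_congr rfl fun i _ => by ring
      rw [hs]; ring
    · intro U hU
      have key : omegaGH a b c₀ (JGH c d ε U) U
          = (c₀ / c) * (d * U.1 + U.2.1) ^ 2 + (c₀ * c) * U.1 ^ 2
            + ∑ i, (c₀ * ε i) * ((U.2.2.1 i) ^ 2 + (U.2.2.2 i) ^ 2) := by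
        simp only [omegaGH, psiGH, JGH, ha, hb, zero_mul, Finset.sum_const_zero, zero_add]
        have hs : (∑ i, (-(ε i) * U.2.2.2 i * U.2.2.2 i - ε i * U.2.2.1 i * U.2.2.1 i))
            = ∑ i, -((ε i) * ((U.2.2.1 i) ^ 2 + (U.2.2.2 i) ^ 2)) :=
          Finset.sum_congr rfl fun i _ => by ring
        rw [hs, Finset.sum_neg_distrib, mul_neg, Finset.mul_sum]
        have hsum2 : (∑ i, (c₀ * ε i) * ((U.2.2.1 i) ^ 2 + (U.2.2.2 i) ^ 2))
            = ∑ i, c₀ * (ε i * ((U.2.2.1 i) ^ 2 + (U.2.2.2 i) ^ 2)) :=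
          Finset.sum_congr rfl fun i _ => by ring
        rw [hsum2]
        field_simp
        ring
      rw [key]
      have ht1 : 0 ≤ (c₀ / c) * (d * U.1 + U.2.1) ^ 2 := by positivity
      have hcc' : 0 < c₀ * c := by linarith [mul_comm c c₀]
      have ht2 : 0 ≤ (c₀ * c) * U.1 ^ 2 := by positivity
      have hts : 0 ≤ ∑ i, (c₀ * ε i) * ((U.2.2.1 i) ^ 2 + (U.2.2.2 i) ^ 2) :=
        Finset.sum_nonneg fun i _ => mul_nonneg (hce i).le (by positivity)
      by_cases hu1 : U.1 = 0
      · by_cases hu2 : U.2.1 = 0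
        · have hk : ∃ k, U.2.2.1 k ≠ 0 ∨ U.2.2.2 k ≠ 0 := by
            by_contra h
            push_neg at h
            exact hU (Prod.ext_iff.mpr ⟨hu1, Prod.ext_iff.mpr ⟨hu2,
              Prod.ext_iff.mpr ⟨funext fun k => (h k).1, funext fun k => (h k).2⟩⟩⟩)
          obtain ⟨k, hk⟩ := hk
          have hpos : 0 < (c₀ * ε k) * ((U.2.2.1 k) ^ 2 + (U.2.2.2 k) ^ 2) := by
            apply mul_pos (hce k)
            rcases hk with h | h
            · have := pow_two_pos_of_ne_zero h; positivity
            · have := pow_two_pos_of_ne_zero h; positivity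
          have : 0 < ∑ i, (c₀ * ε i) * ((U.2.2.1 i) ^ 2 + (U.2.2.2 i) ^ 2) :=
            Finset.sum_pos' (fun i _ => mul_nonneg (hce i).le (by positivity))
              ⟨k, Finset.mem_univ k, hpos⟩
          linarith
        · have : 0 < (c₀ / c) * (d * U.1 + U.2.1) ^ 2 := by
            rw [hu1]
            have : (d * (0:ℝ) + U.2.1) ^ 2 = U.2.1 ^ 2 := by ring
            rw [this]
            exact mul_pos hqc (pow_two_pos_of_ne_zero hu2)
          linarith
      · have : 0 < (c₀ * c) * U.1 ^ 2 := mul_pos hcc' (pow_two_pos_of_ne_zero hu1)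
        linarith
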